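/- Let G be a minimal graph with Δ(G) ≤ k − 1, k ≥ 11, having no nice k-coloring. Suppose G contains two 3-vertices u, v with the same three neighbors x, y, z. For any nice k-coloring ψ of G − {u,v} and any choice of two-element sets C_x, C_y, C_z of colors missing at x, y, z respectively, we have C_x ∩ C_y ∩ C_z ≠ ∅. -/

import Mathlib

open SimpleGraph

/-- The degree of a vertex `v` in a graph `G` (number of neighbors). -/
noncomputable def deg {V : Type*} (G : SimpleGraph V) (v : V) : ℕ :=
  (G.neighborSet v).ncard

/-- The maximum degree `Δ(G)` of a finite graph. -/
noncomputable def maxDeg {V : Type*} [Fintype V] (G : SimpleGraph V) : ℕ :=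
  Finset.univ.sup (deg G)

/-- A total `k`-coloring of `G`: a coloring of vertices (`cv`) and edges (`ce`) with `k`
colors such that no two adjacent vertices, no two incident edges, and no vertex and
incident edge receive the same color. -/
def IsTotalColoring {V : Type*} (G : SimpleGraph V) (k : ℕ)
    (cv : V → Fin k) (ce : Sym2 V → Fin k) : Prop :=
  (∀ u v, G.Adj u v → cv u ≠ cv v) ∧
  (∀ u v w, G.Adj u v → G.Adj u w → v ≠ w → ce s(u, v) ≠ ce s(u, w)) ∧
  (∀ u v, G.Adj u v → cv u ≠ ce s(u, v))

def HasTotalColoring {V : Type*} (G : SimpleGraph V) (k : ℕ) : Prop :=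
  ∃ cv ce, IsTotalColoring G k cv ce

/-- The total chromatic number `χ''(G)`: the least `k` admitting a total `k`-coloring. -/
noncomputable def totalChromaticNumber {V : Type*} (G : SimpleGraph V) : ℕ :=
  sInf {k | HasTotalColoring G k}

/-- `H` is a minor of `G`: there are pairwise disjoint nonempty connected branch sets in `G`,
one for each vertex of `H`, with an edge of `G` between the branch sets of any two
vertices adjacent in `H`. -/
def HasMinor {V W : Type*} (G : SimpleGraph V) (H : SimpleGraph W) : Prop :=
  ∃ φ : W → Set V,
    (∀ w, (G.induce (φ w)).Connected) ∧
    (∀ w₁ w₂, w₁ ≠ w₂ → Disjoint (φ w₁) (φ w₂)) ∧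
    (∀ w₁ w₂, H.Adj w₁ w₂ → ∃ u ∈ φ w₁, ∃ v ∈ φ w₂, G.Adj u v)

abbrev K5 : SimpleGraph (Fin 5) := ⊤

abbrev K33 : SimpleGraph (Fin 3 ⊕ Fin 3) := completeBipartiteGraph (Fin 3) (Fin 3)

/-- A nice `k`-coloring: a proper coloring of all edges and of all vertices of degree at
least `6`, such that no two adjacent or incident colored elements share a color. -/
def IsNiceColoring {V : Type*} (G : SimpleGraph V) (k : ℕ)
    (cv : V → Fin k) (ce : Sym2 V → Fin k) : Prop :=
  (∀ u v, G.Adj u v → 6 ≤ deg G u → 6 ≤ deg G v → cv u ≠ cv v) ∧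
  (∀ u v w, G.Adj u v → G.Adj u w → v ≠ w → ce s(u, v) ≠ ce s(u, w)) ∧
  (∀ u v, G.Adj u v → 6 ≤ deg G u → cv u ≠ ce s(u, v))

def HasNiceColoring {V : Type*} (G : SimpleGraph V) (k : ℕ) : Prop :=
  ∃ cv ce, IsNiceColoring G k cv ce

/-- A color `c` is missing at `v` if it is used neither on `v` (when `v` is colored,
i.e. has degree at least 6) nor on any edge incident with `v`. -/
def MissingAt {V : Type*} {k : ℕ} (G : SimpleGraph V)
    (cv : V → Fin k) (ce : Sym2 V → Fin k) (v : V) (c : Fin k) : Prop :=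
  (6 ≤ deg G v → cv v ≠ c) ∧ ∀ w, G.Adj v w → ce s(v, w) ≠ c

/-- `G` is planar: it has a drawing in the plane with injective vertex placement and
edges drawn as arcs whose interiors are pairwise disjoint and avoid all vertex points. -/
def IsPlanar {V : Type*} (G : SimpleGraph V) : Prop :=
  ∃ (p : V → ℝ × ℝ) (γ : G.edgeSet → ℝ → ℝ × ℝ),
    Function.Injective p ∧
    (∀ e, ContinuousOn (γ e) (Set.Icc 0 1)) ∧
    (∀ e, Set.InjOn (γ e) (Set.Icc 0 1)) ∧
    (∀ e : G.edgeSet, ∀ u v : V, (e : Sym2 V) = s(u, v) →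
      ({γ e 0, γ e 1} : Set (ℝ × ℝ)) = {p u, p v}) ∧
    (∀ e : G.edgeSet, ∀ w : V, ∀ t ∈ Set.Ioo (0 : ℝ) 1, γ e t ≠ p w) ∧
    (∀ e₁ e₂ : G.edgeSet, e₁ ≠ e₂ → ∀ s ∈ Set.Ioo (0 : ℝ) 1, ∀ t ∈ Set.Ioo (0 : ℝ) 1,
      γ e₁ s ≠ γ e₂ t)

/-- A planar triangulation, i.e. an edge-maximal planar graph. -/
def IsPlanarTriangulation {W : Type*} (H : SimpleGraph W) : Prop :=
  IsPlanar H ∧ ∀ H' : SimpleGraph W, H < H' → ¬ IsPlanar H'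

/-- The Wagner graph `V₈`: the 8-cycle together with its four main diagonals. -/
def wagnerGraph : SimpleGraph (ZMod 8) :=
  SimpleGraph.fromRel (fun i j => j = i + 1 ∨ j = i + 4)


set_option maxRecDepth 10000

private theorem CORE : ∀ b1 b2 c1 c2 : Fin 6, b1 ≠ b2 → c1 ≠ c2 →
    (∀ m : Fin 6, ¬((m = 0 ∨ m = 1) ∧ (m = b1 ∨ m = b2) ∧ (m = c1 ∨ m = c2))) →
    ∃ p q r : Bool,
      (cond p 0 1 : Fin 6) ≠ (cond q b1 b2) ∧
      (cond p 0 1 : Fin 6) ≠ (cond r c1 c2) ∧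
      (cond q b1 b2) ≠ (cond r c1 c2) ∧
      (cond p 1 0 : Fin 6) ≠ (cond q b2 b1) ∧
      (cond p 1 0 : Fin 6) ≠ (cond r c2 c1) ∧
      (cond q b2 b1) ≠ (cond r c2 c1) := by decide

private theorem sdr222 {α : Type*} [DecidableEq α] (a1 a2 b1 b2 c1 c2 : α)
    (ha : a1 ≠ a2) (hb : b1 ≠ b2) (hc : c1 ≠ c2)
    (h : ∀ m : α, ¬((m = a1 ∨ m = a2) ∧ (m = b1 ∨ m = b2) ∧ (m = c1 ∨ m = c2))) :
    ∃ p q r : Bool,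
      (cond p a1 a2) ≠ (cond q b1 b2) ∧
      (cond p a1 a2) ≠ (cond r c1 c2) ∧
      (cond q b1 b2) ≠ (cond r c1 c2) ∧
      (cond p a2 a1) ≠ (cond q b2 b1) ∧
      (cond p a2 a1) ≠ (cond r c2 c1) ∧
      (cond q b2 b1) ≠ (cond r c2 c1) := by
  set g : Fin 6 → α := ![a1, a2, b1, b2, c1, c2] with hg
  set r : Fin 6 → Fin 6 := fun i =>
    if g i = g 0 then 0 else if g i = g 1 then 1 else if g i = g 2 then 2
    else if g i = g 3 then 3 else if g i = g 4 then 4 else 5 with hr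
  have P1 : ∀ i, g (r i) = g i := by
    intro i
    simp only [hr]
    split_ifs with h0 h1 h2 h3 h4
    · exact h0.symm
    · exact h1.symm
    · exact h2.symm
    · exact h3.symm
    · exact h4.symm
    · fin_cases i <;> simp_all
  have P2 : ∀ i j, g i = g j → r i = r j := by
    intro i j hij
    simp only [hr, hij]
  have giff : ∀ i j, g i = g j ↔ r i = r j :=
    fun i j => ⟨P2 i j, fun h => by rw [← P1 i, ← P1 j, h]⟩
  have gne : ∀ i j, r i ≠ r j → g i ≠ g j := fun i j h e => h (P2 i j e)
  have hr0 : r 0 = 0 := by simp [hr]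
  have hr1 : r 1 = 1 := by
    have : g 1 ≠ g 0 := by simpa [hg] using ha.symm
    simp [hr, this]
  have hB : r 2 ≠ r 3 := fun e => hb ((giff 2 3).mpr e)
  have hC : r 4 ≠ r 5 := fun e => hc ((giff 4 5).mpr e)
  have hH : ∀ m : Fin 6, ¬((m = 0 ∨ m = 1) ∧ (m = r 2 ∨ m = r 3) ∧ (m = r 4 ∨ m = r 5)) := by
    rintro m ⟨h1, h2, h3⟩
    rw [← hr0, ← hr1] at h1
    rcases h1 with rfl | rfl
    · refine h (g 0) ⟨Or.inl rfl, ?_, ?_⟩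
      · rcases h2 with e | e
        · exact Or.inl ((giff 0 2).mpr e)
        · exact Or.inr ((giff 0 3).mpr e)
      · rcases h3 with e | e
        · exact Or.inl ((giff 0 4).mpr e)
        · exact Or.inr ((giff 0 5).mpr e)
    · refine h (g 1) ⟨Or.inr rfl, ?_, ?_⟩
      · rcases h2 with e | e
        · exact Or.inl ((giff 1 2).mpr e)
        · exact Or.inr ((giff 1 3).mpr e)
      · rcases h3 with e | e
        · exact Or.inl ((giff 1 4).mpr e)
        · exact Or.inr ((giff 1 5).mpr e)
  obtain ⟨p, q, rr, H1, H2, H3, H4, H5, H6⟩ := CORE (r 2) (r 3) (r 4) (r 5) hB hC hH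
  rw [← hr0, ← hr1] at H1 H2 H4 H5
  refine ⟨p, q, rr, ?_, ?_, ?_, ?_, ?_, ?_⟩ <;>
    cases p <;> cases q <;> cases rr <;>
    simp only [Bool.cond_true, Bool.cond_false] at * <;>
    first
      | exact gne 0 2 H1 | exact gne 0 3 H1 | exact gne 1 2 H1 | exact gne 1 3 H1
      | exact gne 0 4 H2 | exact gne 0 5 H2 | exact gne 1 4 H2 | exact gne 1 5 H2
      | exact gne 2 4 H3 | exact gne 2 5 H3 | exact gne 3 4 H3 | exact gne 3 5 H3
      | exact gne 1 3 H4 | exact gne 1 2 H4 | exact gne 0 3 H4 | exact gne 0 2 H4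
      | exact gne 1 5 H5 | exact gne 1 4 H5 | exact gne 0 5 H5 | exact gne 0 4 H5
      | exact gne 3 5 H6 | exact gne 3 4 H6 | exact gne 2 5 H6 | exact gne 2 4 H6

/-- Two disjoint systems for two sets of size ≥ 2. -/
private theorem two_sdr {α : Type*} [DecidableEq α] (A B : Finset α)
    (hA : 2 ≤ A.card) (hB : 2 ≤ B.card) :
    ∃ a1 a2 b1 b2, a1 ∈ A ∧ a2 ∈ A ∧ b1 ∈ B ∧ b2 ∈ B ∧
      a1 ≠ a2 ∧ b1 ≠ b2 ∧ a1 ≠ b1 ∧ a2 ≠ b2 := by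
  obtain ⟨a1, a2, ha1, ha2, ha⟩ := (Finset.one_lt_card_iff (s := A)).mp (by omega)
  obtain ⟨p, q, hp, hq, hpq⟩ := (Finset.one_lt_card_iff (s := B)).mp (by omega)
  by_cases h1 : p = a1
  · subst h1
    exact ⟨p, a2, q, p, ha1, ha2, hq, hp, ha, hpq.symm, hpq, ha.symm⟩
  · by_cases h2 : q = a2
    · exact ⟨a1, a2, q, p, ha1, ha2, hq, hp, ha, hpq.symm,
        fun e => ha (e.trans h2), fun e => hpq (e.symm.trans h2.symm)⟩
    · exact ⟨a1, a2, p, q, ha1, ha2, hp, hq, ha, hpq,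
        fun e => h1 e.symm, fun e => h2 e.symm⟩

/-- Two disjoint SDRs for three sets when the third is large. -/
private theorem three_sdr_bigC {α : Type*} [DecidableEq α] (A B C : Finset α)
    (hA : 2 ≤ A.card) (hB : 2 ≤ B.card) (hC : 4 ≤ C.card) :
    ∃ a1 a2 b1 b2 c1 c2, a1 ∈ A ∧ a2 ∈ A ∧ b1 ∈ B ∧ b2 ∈ B ∧ c1 ∈ C ∧ c2 ∈ C ∧
      a1 ≠ a2 ∧ b1 ≠ b2 ∧ c1 ≠ c2 ∧
      a1 ≠ b1 ∧ a1 ≠ c1 ∧ b1 ≠ c1 ∧ a2 ≠ b2 ∧ a2 ≠ c2 ∧ b2 ≠ c2 := by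
  obtain ⟨a1, a2, b1, b2, ha1, ha2, hb1, hb2, haa, hbb, hab1, hab2⟩ := two_sdr A B hA hB
  have h1 : (C \ {a1, b1}).Nonempty := by
    have e1 : ({a1, b1} : Finset α).card ≤ 2 := (Finset.card_insert_le _ _).trans (by simp)
    have e2 := Finset.le_card_sdiff ({a1, b1} : Finset α) C
    exact Finset.card_pos.mp (by omega)
  obtain ⟨c1, hc1⟩ := h1
  have h2 : (C \ {a2, b2, c1}).Nonempty := by
    have e1 : ({a2, b2, c1} : Finset α).card ≤ 3 :=
      (Finset.card_insert_le _ _).trans (by have := Finset.card_insert_le b2 ({c1} : Finset α); simp at this; omega)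
    have e2 := Finset.le_card_sdiff ({a2, b2, c1} : Finset α) C
    exact Finset.card_pos.mp (by omega)
  obtain ⟨c2, hc2⟩ := h2
  simp only [Finset.mem_sdiff, Finset.mem_insert, Finset.mem_singleton, not_or] at hc1 hc2
  exact ⟨a1, a2, b1, b2, c1, c2, ha1, ha2, hb1, hb2, hc1.1, hc2.1, haa, hbb,
    fun e => hc2.2.2.2 e.symm, hab1, fun e => hc1.2.1 e.symm, fun e => hc1.2.2 e.symm,
    hab2, fun e => hc2.2.1 e.symm, fun e => hc2.2.2.1 e.symm⟩

/-- Main combinatorial lemma: two disjoint SDRs for three sets. -/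
private theorem three_sdr {α : Type*} [DecidableEq α] (A B C : Finset α)
    (hA : 2 ≤ A.card) (hB : 2 ≤ B.card) (hC : 2 ≤ C.card)
    (hkey : A ∩ B ∩ C = ∅ ∨ 4 ≤ A.card ∨ 4 ≤ B.card ∨ 4 ≤ C.card) :
    ∃ a1 a2 b1 b2 c1 c2, a1 ∈ A ∧ a2 ∈ A ∧ b1 ∈ B ∧ b2 ∈ B ∧ c1 ∈ C ∧ c2 ∈ C ∧
      a1 ≠ a2 ∧ b1 ≠ b2 ∧ c1 ≠ c2 ∧
      a1 ≠ b1 ∧ a1 ≠ c1 ∧ b1 ≠ c1 ∧ a2 ≠ b2 ∧ a2 ≠ c2 ∧ b2 ≠ c2 := by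
  rcases hkey with hkey | hbig | hbig | hbig
  · -- empty triple intersection: shrink to 2-subsets and use sdr222
    obtain ⟨A', hA'sub, hA'⟩ := Finset.exists_subset_card_eq hA
    obtain ⟨B', hB'sub, hB'⟩ := Finset.exists_subset_card_eq hB
    obtain ⟨C', hC'sub, hC'⟩ := Finset.exists_subset_card_eq hC
    obtain ⟨a1, a2, ha, hAe⟩ := Finset.card_eq_two.mp hA'
    obtain ⟨b1, b2, hb, hBe⟩ := Finset.card_eq_two.mp hB'
    obtain ⟨c1, c2, hc, hCe⟩ := Finset.card_eq_two.mp hC'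
    have hmemA : ∀ t, t = a1 ∨ t = a2 → t ∈ A := by
      rintro t (rfl | rfl) <;> [exact hA'sub (hAe ▸ by simp); exact hA'sub (hAe ▸ by simp)]
    have hmemB : ∀ t, t = b1 ∨ t = b2 → t ∈ B := by
      rintro t (rfl | rfl) <;> [exact hB'sub (hBe ▸ by simp); exact hB'sub (hBe ▸ by simp)]
    have hmemC : ∀ t, t = c1 ∨ t = c2 → t ∈ C := by
      rintro t (rfl | rfl) <;> [exact hC'sub (hCe ▸ by simp); exact hC'sub (hCe ▸ by simp)]
    have hemp : ∀ m : α, ¬((m = a1 ∨ m = a2) ∧ (m = b1 ∨ m = b2) ∧ (m = c1 ∨ m = c2)) := by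
      rintro m ⟨h1, h2, h3⟩
      have : m ∈ A ∩ B ∩ C := by
        simp only [Finset.mem_inter]
        exact ⟨⟨hmemA m h1, hmemB m h2⟩, hmemC m h3⟩
      rw [hkey] at this
      exact absurd this (Finset.notMem_empty m)
    obtain ⟨p, q, r, H1, H2, H3, H4, H5, H6⟩ := sdr222 a1 a2 b1 b2 c1 c2 ha hb hc hemp
    refine ⟨cond p a1 a2, cond p a2 a1, cond q b1 b2, cond q b2 b1, cond r c1 c2, cond r c2 c1,
      hmemA _ ?_, hmemA _ ?_, hmemB _ ?_, hmemB _ ?_, hmemC _ ?_, hmemC _ ?_,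
      ?_, ?_, ?_, H1, H2, H3, H4, H5, H6⟩ <;>
      [cases p; cases p; cases q; cases q; cases r; cases r; cases p; cases q; cases r] <;>
      simp [ha, hb, hc, ha.symm, hb.symm, hc.symm]
  · obtain ⟨b1, b2, c1, c2, a1, a2, h1, h2, h3, h4, h5, h6, n1, n2, n3, n4, n5, n6, n7, n8, n9⟩ :=
      three_sdr_bigC B C A hB hC hbig
    exact ⟨a1, a2, b1, b2, c1, c2, h5, h6, h1, h2, h3, h4, n3, n1, n2,
      n5.symm, n6.symm, n4, n8.symm, n9.symm, n7⟩
  · obtain ⟨a1, a2, c1, c2, b1, b2, h1, h2, h3, h4, h5, h6, n1, n2, n3, n4, n5, n6, n7, n8, n9⟩ :=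
      three_sdr_bigC A C B hA hC hbig
    exact ⟨a1, a2, b1, b2, c1, c2, h1, h2, h5, h6, h3, h4, n1, n3, n2,
      n5, n4, n6.symm, n8, n7, n9.symm⟩
  · exact three_sdr_bigC A B C hA hB hbig

/-- Claim 2(i): if `G` is a minimal graph with no nice `k`-coloring containing two
`3`-vertices `u`, `v` with the same neighbors `x`, `y`, `z`, then for any nice
`k`-coloring of `G - {u, v}` and any two-element sets `Cx`, `Cy`, `Cz` of colors missing
at `x`, `y`, `z`, we have `Cx ∩ Cy ∩ Cz ≠ ∅`. -/
theorem missing_colors_intersect {V : Type*} [Fintype V] (G : SimpleGraph V) (k : ℕ)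
    (hk : 11 ≤ k) (hΔ : maxDeg G ≤ k - 1)
    (hG : ¬ HasNiceColoring G k)
    (hmin : ∀ H : SimpleGraph V, H < G → HasNiceColoring H k)
    (u v x y z : V) (huv : u ≠ v)
    (hu3 : deg G u = 3) (hv3 : deg G v = 3)
    (hNu : G.neighborSet u = {x, y, z}) (hNv : G.neighborSet v = {x, y, z})
    (cv : V → Fin k) (ce : Sym2 V → Fin k)
    (hψ : IsNiceColoring (G.deleteEdges (G.incidenceSet u ∪ G.incidenceSet v)) k cv ce)
    (Cx Cy Cz : Finset (Fin k))
    (hCx : Cx.card = 2) (hCy : Cy.card = 2) (hCz : Cz.card = 2)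
    (hmx : ∀ c ∈ Cx,
      MissingAt (G.deleteEdges (G.incidenceSet u ∪ G.incidenceSet v)) cv ce x c)
    (hmy : ∀ c ∈ Cy,
      MissingAt (G.deleteEdges (G.incidenceSet u ∪ G.incidenceSet v)) cv ce y c)
    (hmz : ∀ c ∈ Cz,
      MissingAt (G.deleteEdges (G.incidenceSet u ∪ G.incidenceSet v)) cv ce z c) :
    (Cx ∩ Cy ∩ Cz).Nonempty := by
  classical
  by_contra hne
  have hCempty : Cx ∩ Cy ∩ Cz = ∅ := Finset.not_nonempty_iff_eq_empty.mp hne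
  apply hG
  set G' := G.deleteEdges (G.incidenceSet u ∪ G.incidenceSet v) with hG'
  obtain ⟨hψ1, hψ2, hψ3⟩ := hψ
  -- basic adjacency facts
  have hadj' : ∀ a b : V, G'.Adj a b ↔ G.Adj a b ∧ a ≠ u ∧ a ≠ v ∧ b ≠ u ∧ b ≠ v := by
    intro a b
    rw [hG']
    simp only [SimpleGraph.deleteEdges_adj, Set.mem_union,
      SimpleGraph.mk'_mem_incidenceSet_iff, not_or, not_and]
    constructor
    · rintro ⟨h, h1, h2⟩
      exact ⟨h, fun e => (h1 h).1 e.symm, fun e => (h2 h).1 e.symm,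
        fun e => (h1 h).2 e.symm, fun e => (h2 h).2 e.symm⟩
    · rintro ⟨h, h1, h2, h3, h4⟩
      exact ⟨h, fun _ => ⟨fun e => h1 e.symm, fun e => h3 e.symm⟩,
        fun _ => ⟨fun e => h2 e.symm, fun e => h4 e.symm⟩⟩
  have hux : G.Adj u x := by
    have h : x ∈ G.neighborSet u := by rw [hNu]; simp
    exact h
  have huy : G.Adj u y := by
    have h : y ∈ G.neighborSet u := by rw [hNu]; simp
    exact h
  have huz : G.Adj u z := by
    have h : z ∈ G.neighborSet u := by rw [hNu]; simp
    exact h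
  have hvx : G.Adj v x := by
    have h : x ∈ G.neighborSet v := by rw [hNv]; simp
    exact h
  have hvy : G.Adj v y := by
    have h : y ∈ G.neighborSet v := by rw [hNv]; simp
    exact h
  have hvz : G.Adj v z := by
    have h : z ∈ G.neighborSet v := by rw [hNv]; simp
    exact h
  have nux : u ≠ x := hux.ne
  have nxu : x ≠ u := hux.ne'
  have nuy : u ≠ y := huy.ne
  have nyu : y ≠ u := huy.ne'
  have nuz : u ≠ z := huz.ne
  have nzu : z ≠ u := huz.ne'
  have nvx : v ≠ x := hvx.ne
  have nxv : x ≠ v := hvx.ne'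
  have nvy : v ≠ y := hvy.ne
  have nyv : y ≠ v := hvy.ne'
  have nvz : v ≠ z := hvz.ne
  have nzv : z ≠ v := hvz.ne'
  -- x, y, z pairwise distinct
  have hcard3 : ({x, y, z} : Set V).ncard = 3 := by rw [← hNu]; exact hu3
  have hle2 : ∀ a b : V, ({a, b} : Set V).ncard ≤ 2 :=
    fun a b => (Set.ncard_insert_le _ _).trans (by simp)
  have nxy : x ≠ y := by
    rintro rfl
    have hsub : ({x, x, z} : Set V) ⊆ {x, z} := by intro w hw; simpa using hw
    have := (Set.ncard_le_ncard hsub (Set.toFinite _)).trans (hle2 x z)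
    omega
  have nxz : x ≠ z := by
    rintro rfl
    have hsub : ({x, y, x} : Set V) ⊆ {x, y} := by
      intro w hw; simp at hw ⊢; tauto
    have := (Set.ncard_le_ncard hsub (Set.toFinite _)).trans (hle2 x y)
    omega
  have nyz : y ≠ z := by
    rintro rfl
    have hsub : ({x, y, y} : Set V) ⊆ {x, y} := by
      intro w hw; simp at hw ⊢; tauto
    have := (Set.ncard_le_ncard hsub (Set.toFinite _)).trans (hle2 x y)
    omega
  have nyx : y ≠ x := nxy.symm
  have nzx : z ≠ x := nxz.symm
  have nzy : z ≠ y := nyz.symm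
  -- degree facts
  have hdegub : ∀ w : V, deg G w ≤ k - 1 :=
    fun w => le_trans (Finset.le_sup (Finset.mem_univ w)) hΔ
  have hN' : ∀ w : V, w ≠ u → w ≠ v → G'.neighborSet w = G.neighborSet w \ {u, v} := by
    intro w hwu hwv
    ext b
    simp only [SimpleGraph.mem_neighborSet, hadj', Set.mem_diff, Set.mem_insert_iff,
      Set.mem_singleton_iff, not_or]
    constructor
    · rintro ⟨h, -, -, h3, h4⟩; exact ⟨h, h3, h4⟩
    · rintro ⟨h, h3, h4⟩; exact ⟨h, hwu, hwv, h3, h4⟩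
  have hdeg_other : ∀ w : V, w ≠ u → w ≠ v → w ≠ x → w ≠ y → w ≠ z → deg G' w = deg G w := by
    intro w h1 h2 h3 h4 h5
    have hns : G'.neighborSet w = G.neighborSet w := by
      rw [hN' w h1 h2]
      ext b
      simp only [Set.mem_diff, Set.mem_insert_iff, Set.mem_singleton_iff, not_or,
        SimpleGraph.mem_neighborSet]
      constructor
      · rintro ⟨hb, -⟩; exact hb
      · intro hb
        refine ⟨hb, ?_, ?_⟩
        · intro e
          have hmem : w ∈ G.neighborSet u := by
            rw [SimpleGraph.mem_neighborSet]
            exact e ▸ hb.symm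
          rw [hNu] at hmem
          simp only [Set.mem_insert_iff, Set.mem_singleton_iff] at hmem
          tauto
        · intro e
          have hmem : w ∈ G.neighborSet v := by
            rw [SimpleGraph.mem_neighborSet]
            exact e ▸ hb.symm
          rw [hNv] at hmem
          simp only [Set.mem_insert_iff, Set.mem_singleton_iff] at hmem
          tauto
    unfold deg
    rw [hns]
  -- neighbor finsets in G'
  set nb : V → Finset V := fun t => Set.Finite.toFinset (Set.toFinite (G'.neighborSet t))
    with hnbdef
  have hnb : ∀ t w : V, w ∈ nb t ↔ G'.Adj t w := by
    intro t w
    simp [hnbdef, Set.Finite.mem_toFinset]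
  have hnbcard : ∀ t : V, (nb t).card = deg G' t := by
    intro t
    rw [show deg G' t = (G'.neighborSet t).ncard from rfl,
      Set.ncard_eq_toFinset_card (G'.neighborSet t) (Set.toFinite _)]
  -- choosing a color outside a small forbidden set
  have hchoose : ∀ F : Finset (Fin k), F.card ≤ 10 → ∃ c, c ∉ F := by
    intro F hF
    have hsd : (Finset.univ \ F).Nonempty := by
      refine Finset.card_pos.mp ?_
      have h1 := Finset.le_card_sdiff F (Finset.univ : Finset (Fin k))
      have h2 : (Finset.univ : Finset (Fin k)).card = k := by simp
      omega
    obtain ⟨c, hc⟩ := hsd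
    exact ⟨c, (Finset.mem_sdiff.mp hc).2⟩
  -- choose fresh vertex colors for x, y, z if needed
  have hFcard : ∀ (t : V) (f : V → Fin k), deg G' t ≤ 5 →
      (((nb t).image (fun w => ce s(t, w))) ∪ ((nb t).image f)).card ≤ 10 := by
    intro t f hdeg
    have h1 := Finset.card_union_le ((nb t).image (fun w => ce s(t, w))) ((nb t).image f)
    have h2 := Finset.card_image_le (s := nb t) (f := fun w => ce s(t, w))
    have h3 := Finset.card_image_le (s := nb t) (f := f)
    have h4 := hnbcard t
    omega
  obtain ⟨fx, hfx_eq, hfx_fresh⟩ :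
      ∃ f : Fin k, (¬(6 ≤ deg G x ∧ deg G' x < 6) → f = cv x) ∧
        ((6 ≤ deg G x ∧ deg G' x < 6) →
          f ∉ ((nb x).image (fun w => ce s(x, w))) ∪ ((nb x).image cv)) := by
    by_cases hcase : 6 ≤ deg G x ∧ deg G' x < 6
    · obtain ⟨c, hc⟩ := hchoose _ (hFcard x cv (by omega))
      exact ⟨c, fun h => absurd hcase h, fun _ => hc⟩
    · exact ⟨cv x, fun _ => rfl, fun h => absurd h hcase⟩
  obtain ⟨fy, hfy_eq, hfy_fresh⟩ :
      ∃ f : Fin k, (¬(6 ≤ deg G y ∧ deg G' y < 6) → f = cv y) ∧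
        ((6 ≤ deg G y ∧ deg G' y < 6) →
          f ∉ ((nb y).image (fun w => ce s(y, w))) ∪
            ((nb y).image (fun w => if w = x then fx else cv w))) := by
    by_cases hcase : 6 ≤ deg G y ∧ deg G' y < 6
    · obtain ⟨c, hc⟩ := hchoose _ (hFcard y _ (by omega))
      exact ⟨c, fun h => absurd hcase h, fun _ => hc⟩
    · exact ⟨cv y, fun _ => rfl, fun h => absurd h hcase⟩
  obtain ⟨fz, hfz_eq, hfz_fresh⟩ :
      ∃ f : Fin k, (¬(6 ≤ deg G z ∧ deg G' z < 6) → f = cv z) ∧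
        ((6 ≤ deg G z ∧ deg G' z < 6) →
          f ∉ ((nb z).image (fun w => ce s(z, w))) ∪
            ((nb z).image (fun w => if w = x then fx else if w = y then fy else cv w))) := by
    by_cases hcase : 6 ≤ deg G z ∧ deg G' z < 6
    · obtain ⟨c, hc⟩ := hchoose _ (hFcard z _ (by omega))
      exact ⟨c, fun h => absurd hcase h, fun _ => hc⟩
    · exact ⟨cv z, fun _ => rfl, fun h => absurd h hcase⟩
  -- available color sets for the new edges
  have hMbound : ∀ (t : V) (f : Fin k), deg G' t ≤ 5 →
      4 ≤ (Finset.univ.filter (fun c => MissingAt G' cv ce t c ∧ c ≠ f)).card := by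
    intro t f hdeg
    have hsub : Finset.univ.filter (fun c => ¬(MissingAt G' cv ce t c ∧ c ≠ f)) ⊆
        insert (cv t) (insert f ((nb t).image fun w => ce s(t, w))) := by
      intro c hc
      simp only [Finset.mem_filter, Finset.mem_univ, true_and, MissingAt, not_and_or,
        not_not] at hc
      simp only [Finset.mem_insert, Finset.mem_image]
      rcases hc with hc | hc
      · push_neg at hc
        rcases hc with hc | ⟨w, hw, he⟩
        · exact Or.inl hc.2.symm
        · exact Or.inr (Or.inr ⟨w, (hnb t w).mpr hw, he⟩)
      · exact Or.inr (Or.inl hc)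
    have h1 : (Finset.univ.filter (fun c => ¬(MissingAt G' cv ce t c ∧ c ≠ f))).card ≤
        deg G' t + 2 := by
      refine (Finset.card_le_card hsub).trans ?_
      have h2 := Finset.card_insert_le (cv t) (insert f ((nb t).image fun w => ce s(t, w)))
      have h3 := Finset.card_insert_le f ((nb t).image fun w => ce s(t, w))
      have h4 := Finset.card_image_le (s := nb t) (f := fun w => ce s(t, w))
      have h5 := hnbcard t
      omega
    have h6 := Finset.card_filter_add_card_filter_not
      (s := (Finset.univ : Finset (Fin k))) (p := fun c => MissingAt G' cv ce t c ∧ c ≠ f)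
    have h7 : (Finset.univ : Finset (Fin k)).card = k := by simp
    omega
  set Ax : Finset (Fin k) := if 6 ≤ deg G' x then Cx
    else Finset.univ.filter (fun c => MissingAt G' cv ce x c ∧ c ≠ fx) with hAxdef
  set Ay : Finset (Fin k) := if 6 ≤ deg G' y then Cy
    else Finset.univ.filter (fun c => MissingAt G' cv ce y c ∧ c ≠ fy) with hAydef
  set Az : Finset (Fin k) := if 6 ≤ deg G' z then Cz
    else Finset.univ.filter (fun c => MissingAt G' cv ce z c ∧ c ≠ fz) with hAzdef
  have hAx2 : 2 ≤ Ax.card := by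
    rw [hAxdef]; split_ifs with h
    · omega
    · have := hMbound x fx (by omega); omega
  have hAy2 : 2 ≤ Ay.card := by
    rw [hAydef]; split_ifs with h
    · omega
    · have := hMbound y fy (by omega); omega
  have hAz2 : 2 ≤ Az.card := by
    rw [hAzdef]; split_ifs with h
    · omega
    · have := hMbound z fz (by omega); omega
  have hAxkey : ∀ c ∈ Ax, MissingAt G' cv ce x c ∧ c ≠ fx := by
    intro c hc
    rw [hAxdef] at hc
    split_ifs at hc with h
    · have hm := hmx c hc
      have hfxe : fx = cv x := hfx_eq (by omega)
      exact ⟨hm, fun e => (hm.1 h) (hfxe ▸ e.symm)⟩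
    · simpa using (Finset.mem_filter.mp hc).2
  have hAykey : ∀ c ∈ Ay, MissingAt G' cv ce y c ∧ c ≠ fy := by
    intro c hc
    rw [hAydef] at hc
    split_ifs at hc with h
    · have hm := hmy c hc
      have hfye : fy = cv y := hfy_eq (by omega)
      exact ⟨hm, fun e => (hm.1 h) (hfye ▸ e.symm)⟩
    · simpa using (Finset.mem_filter.mp hc).2
  have hAzkey : ∀ c ∈ Az, MissingAt G' cv ce z c ∧ c ≠ fz := by
    intro c hc
    rw [hAzdef] at hc
    split_ifs at hc with h
    · have hm := hmz c hc
      have hfze : fz = cv z := hfz_eq (by omega)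
      exact ⟨hm, fun e => (hm.1 h) (hfze ▸ e.symm)⟩
    · simpa using (Finset.mem_filter.mp hc).2
  have hkey : Ax ∩ Ay ∩ Az = ∅ ∨ 4 ≤ Ax.card ∨ 4 ≤ Ay.card ∨ 4 ≤ Az.card := by
    by_cases h1 : 6 ≤ deg G' x
    · by_cases h2 : 6 ≤ deg G' y
      · by_cases h3 : 6 ≤ deg G' z
        · left
          rw [hAxdef, hAydef, hAzdef, if_pos h1, if_pos h2, if_pos h3]
          exact hCempty
        · right; right; right
          rw [hAzdef, if_neg h3]
          exact hMbound z fz (by omega)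
      · right; right; left
        rw [hAydef, if_neg h2]
        exact hMbound y fy (by omega)
    · right; left
      rw [hAxdef, if_neg h1]
      exact hMbound x fx (by omega)
  obtain ⟨aX, bX, aY, bY, aZ, bZ, maX, mbX, maY, mbY, maZ, mbZ,
    nX, nY, nZ, nA1, nA2, nA3, nB1, nB2, nB3⟩ := three_sdr Ax Ay Az hAx2 hAy2 hAz2 hkey
  have mssX1 : MissingAt G' cv ce x aX := (hAxkey aX maX).1
  have mssX2 : MissingAt G' cv ce x bX := (hAxkey bX mbX).1
  have mssY1 : MissingAt G' cv ce y aY := (hAykey aY maY).1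
  have mssY2 : MissingAt G' cv ce y bY := (hAykey bY mbY).1
  have mssZ1 : MissingAt G' cv ce z aZ := (hAzkey aZ maZ).1
  have mssZ2 : MissingAt G' cv ce z bZ := (hAzkey bZ mbZ).1
  have fneX1 : aX ≠ fx := (hAxkey aX maX).2
  have fneX2 : bX ≠ fx := (hAxkey bX mbX).2
  have fneY1 : aY ≠ fy := (hAykey aY maY).2
  have fneY2 : bY ≠ fy := (hAykey bY mbY).2
  have fneZ1 : aZ ≠ fz := (hAzkey aZ maZ).2
  have fneZ2 : bZ ≠ fz := (hAzkey bZ mbZ).2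
  have nvu : v ≠ u := huv.symm
  -- the new coloring
  set cv' : V → Fin k := fun w => if w = x then fx else if w = y then fy
    else if w = z then fz else cv w with hcv'
  set ce' : Sym2 V → Fin k := fun e =>
    if e = s(u, x) then aX else if e = s(u, y) then aY else if e = s(u, z) then aZ
    else if e = s(v, x) then bX else if e = s(v, y) then bY else if e = s(v, z) then bZ
    else ce e with hce'
  -- evaluation lemmas
  have ecvx : cv' x = fx := by simp [hcv']
  have ecvy : cv' y = fy := by simp [hcv', nyx]
  have ecvz : cv' z = fz := by simp [hcv', nzx, nzy]
  have ecvo : ∀ w, w ≠ x → w ≠ y → w ≠ z → cv' w = cv w := by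
    intro w h1 h2 h3; simp [hcv', h1, h2, h3]
  have eux : ce' s(u, x) = aX := by simp [hce']
  have euy : ce' s(u, y) = aY := by simp [hce', Sym2.eq_iff, nyx, nux]
  have euz : ce' s(u, z) = aZ := by simp [hce', Sym2.eq_iff, nzx, nzy, nux, nuy]
  have evx : ce' s(v, x) = bX := by simp [hce', Sym2.eq_iff, nvu, nvx, nxu, nvy, nvz]
  have evy : ce' s(v, y) = bY := by
    simp [hce', Sym2.eq_iff, nvu, nvx, nvy, nvz, nyu, nyx, nxu]
  have evz : ce' s(v, z) = bZ := by
    simp [hce', Sym2.eq_iff, nvu, nvx, nvy, nvz, nzu, nzx, nzy, nxu, nyu]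
  have eold : ∀ a b : V, G'.Adj a b → ce' s(a, b) = ce s(a, b) := by
    intro a b hab
    obtain ⟨-, h1, h2, h3, h4⟩ := (hadj' a b).mp hab
    simp [hce', Sym2.eq_iff, h1, h2, h3, h4]
  -- classification of edges of G
  have hclass : ∀ a b : V, G.Adj a b →
      (a = u ∧ (b = x ∨ b = y ∨ b = z)) ∨ (a = v ∧ (b = x ∨ b = y ∨ b = z)) ∨
      (b = u ∧ (a = x ∨ a = y ∨ a = z)) ∨ (b = v ∧ (a = x ∨ a = y ∨ a = z)) ∨
      G'.Adj a b := by
    intro a b hab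
    by_cases h1 : a = u
    · left
      refine ⟨h1, ?_⟩
      have hm : b ∈ G.neighborSet u := by
        rw [SimpleGraph.mem_neighborSet]; exact h1 ▸ hab
      rw [hNu] at hm; simpa using hm
    by_cases h2 : a = v
    · right; left
      refine ⟨h2, ?_⟩
      have hm : b ∈ G.neighborSet v := by
        rw [SimpleGraph.mem_neighborSet]; exact h2 ▸ hab
      rw [hNv] at hm; simpa using hm
    by_cases h3 : b = u
    · right; right; left
      refine ⟨h3, ?_⟩
      have hm : a ∈ G.neighborSet u := by
        rw [SimpleGraph.mem_neighborSet]; exact h3 ▸ hab.symm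
      rw [hNu] at hm; simpa using hm
    by_cases h4 : b = v
    · right; right; right; left
      refine ⟨h4, ?_⟩
      have hm : a ∈ G.neighborSet v := by
        rw [SimpleGraph.mem_neighborSet]; exact h4 ▸ hab.symm
      rw [hNv] at hm; simpa using hm
    · exact Or.inr (Or.inr (Or.inr (Or.inr ((hadj' a b).mpr ⟨hab, h1, h2, h3, h4⟩))))
  -- fresh color avoidance helpers
  have hfx_ne : ∀ w, G'.Adj x w → (6 ≤ deg G x ∧ deg G' x < 6) →
      fx ≠ ce s(x, w) ∧ fx ≠ cv w := by
    intro w hw hcase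
    have hf := hfx_fresh hcase
    refine ⟨fun e => hf ?_, fun e => hf ?_⟩
    · exact Finset.mem_union_left _ (Finset.mem_image.mpr ⟨w, (hnb x w).mpr hw, e.symm⟩)
    · exact Finset.mem_union_right _ (Finset.mem_image.mpr ⟨w, (hnb x w).mpr hw, e.symm⟩)
  have hfy_ne : ∀ w, G'.Adj y w → (6 ≤ deg G y ∧ deg G' y < 6) →
      fy ≠ ce s(y, w) ∧ fy ≠ (if w = x then fx else cv w) := by
    intro w hw hcase
    have hf := hfy_fresh hcase
    refine ⟨fun e => hf ?_, fun e => hf ?_⟩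
    · exact Finset.mem_union_left _ (Finset.mem_image.mpr ⟨w, (hnb y w).mpr hw, e.symm⟩)
    · exact Finset.mem_union_right _ (Finset.mem_image.mpr ⟨w, (hnb y w).mpr hw, e.symm⟩)
  have hfz_ne : ∀ w, G'.Adj z w → (6 ≤ deg G z ∧ deg G' z < 6) →
      fz ≠ ce s(z, w) ∧ fz ≠ (if w = x then fx else if w = y then fy else cv w) := by
    intro w hw hcase
    have hf := hfz_fresh hcase
    refine ⟨fun e => hf ?_, fun e => hf ?_⟩
    · exact Finset.mem_union_left _ (Finset.mem_image.mpr ⟨w, (hnb z w).mpr hw, e.symm⟩)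
    · exact Finset.mem_union_right _ (Finset.mem_image.mpr ⟨w, (hnb z w).mpr hw, e.symm⟩)
  have hfx_cv : 6 ≤ deg G' x → fx = cv x := fun h => hfx_eq (by omega)
  have hfy_cv : 6 ≤ deg G' y → fy = cv y := fun h => hfy_eq (by omega)
  have hfz_cv : 6 ≤ deg G' z → fz = cv z := fun h => hfz_eq (by omega)
  -- vertex-vertex condition helpers
  have hCz' : ∀ p, G'.Adj z p → 6 ≤ deg G z → 6 ≤ deg G p → cv' z ≠ cv' p := by
    intro p hzp h6z h6p
    obtain ⟨-, -, -, hpu, hpv⟩ := (hadj' z p).mp hzp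
    have hpz : p ≠ z := hzp.ne'
    by_cases hcz : 6 ≤ deg G' z
    · rw [ecvz, hfz_cv hcz]
      by_cases e1 : p = x
      · obtain rfl := e1.symm
        rw [ecvx]
        by_cases hcx : 6 ≤ deg G' x
        · rw [hfx_cv hcx]
          exact hψ1 z x hzp hcz hcx
        · exact fun e => ((hfx_ne z hzp.symm ⟨h6p, by omega⟩).2) (e.symm)
      by_cases e2 : p = y
      · obtain rfl := e2.symm
        rw [ecvy]
        by_cases hcy : 6 ≤ deg G' y
        · rw [hfy_cv hcy]
          exact hψ1 z y hzp hcz hcy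
        · have h := (hfy_ne z hzp.symm ⟨h6p, by omega⟩).2
          rw [if_neg nzx] at h
          exact fun e => h e.symm
      · rw [ecvo p e1 e2 hpz]
        have hdp := hdeg_other p hpu hpv e1 e2 hpz
        exact hψ1 z p hzp hcz (by omega)
    · rw [ecvz]
      have h := (hfz_ne p hzp ⟨h6z, by omega⟩).2
      have he : (if p = x then fx else if p = y then fy else cv p) = cv' p := by
        by_cases e1 : p = x
        · obtain rfl := e1.symm; rw [if_pos rfl, ecvx]
        by_cases e2 : p = y
        · obtain rfl := e2.symm; rw [if_neg nyx, if_pos rfl, ecvy]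
        · rw [if_neg e1, if_neg e2, ecvo p e1 e2 hpz]
      rw [← he]
      exact h
  have hCy' : ∀ p, G'.Adj y p → p ≠ z → 6 ≤ deg G y → 6 ≤ deg G p → cv' y ≠ cv' p := by
    intro p hyp hpz h6y h6p
    obtain ⟨-, -, -, hpu, hpv⟩ := (hadj' y p).mp hyp
    have hpy : p ≠ y := hyp.ne'
    by_cases hcy : 6 ≤ deg G' y
    · rw [ecvy, hfy_cv hcy]
      by_cases e1 : p = x
      · obtain rfl := e1.symm
        rw [ecvx]
        by_cases hcx : 6 ≤ deg G' x
        · rw [hfx_cv hcx]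
          exact hψ1 y x hyp hcy hcx
        · exact fun e => ((hfx_ne y hyp.symm ⟨h6p, by omega⟩).2) (e.symm)
      · rw [ecvo p e1 hpy hpz]
        have hdp := hdeg_other p hpu hpv e1 hpy hpz
        exact hψ1 y p hyp hcy (by omega)
    · rw [ecvy]
      have h := (hfy_ne p hyp ⟨h6y, by omega⟩).2
      have he : (if p = x then fx else cv p) = cv' p := by
        by_cases e1 : p = x
        · obtain rfl := e1.symm; rw [if_pos rfl, ecvx]
        · rw [if_neg e1, ecvo p e1 hpy hpz]
      rw [← he]
      exact h
  have hCx' : ∀ p, G'.Adj x p → p ≠ y → p ≠ z → 6 ≤ deg G x → 6 ≤ deg G p →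
      cv' x ≠ cv' p := by
    intro p hxp hpy hpz h6x h6p
    obtain ⟨-, -, -, hpu, hpv⟩ := (hadj' x p).mp hxp
    have hpx : p ≠ x := hxp.ne'
    rw [ecvx, ecvo p hpx hpy hpz]
    by_cases hcx : 6 ≤ deg G' x
    · rw [hfx_cv hcx]
      have hdp := hdeg_other p hpu hpv hpx hpy hpz
      exact hψ1 x p hxp hcx (by omega)
    · exact (hfx_ne p hxp ⟨h6x, by omega⟩).2
  unfold HasNiceColoring IsNiceColoring
  refine ⟨cv', ce', ?_, ?_, ?_⟩
  · -- vertex-vertex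
    intro p q hpq h6p h6q
    have hpu : p ≠ u := by rintro rfl; rw [hu3] at h6p; omega
    have hpv : p ≠ v := by rintro rfl; rw [hv3] at h6p; omega
    have hqu : q ≠ u := by rintro rfl; rw [hu3] at h6q; omega
    have hqv : q ≠ v := by rintro rfl; rw [hv3] at h6q; omega
    have hpq' : G'.Adj p q := (hadj' p q).mpr ⟨hpq, hpu, hpv, hqu, hqv⟩
    by_cases e1 : q = z
    · obtain rfl := e1.symm; exact (hCz' p hpq'.symm h6q h6p).symm
    by_cases e2 : p = z
    · obtain rfl := e2.symm; exact hCz' q hpq' h6p h6q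
    by_cases e3 : q = y
    · obtain rfl := e3.symm; exact (hCy' p hpq'.symm e2 h6q h6p).symm
    by_cases e4 : p = y
    · obtain rfl := e4.symm; exact hCy' q hpq' e1 h6p h6q
    by_cases e5 : q = x
    · obtain rfl := e5.symm; exact (hCx' p hpq'.symm e4 e2 h6q h6p).symm
    by_cases e6 : p = x
    · obtain rfl := e6.symm; exact hCx' q hpq' e3 e1 h6p h6q
    · rw [ecvo p e6 e4 e2, ecvo q e5 e3 e1]
      have hdp := hdeg_other p hpu hpv e6 e4 e2
      have hdq := hdeg_other q hqu hqv e5 e3 e1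
      exact hψ1 p q hpq' (by omega) (by omega)
  · -- edge-edge
    intro p q r hpq hpr hqr
    rcases hclass p q hpq with ⟨e0, hq3⟩ | ⟨e0, hq3⟩ | ⟨e0, hp3⟩ | ⟨e0, hp3⟩ | hpq'
    · -- p = u
      obtain rfl := e0.symm
      have hr3 : r = x ∨ r = y ∨ r = z := by
        have hm : r ∈ G.neighborSet u := hpr
        rw [hNu] at hm; simpa using hm
      rcases hq3 with rfl | rfl | rfl <;> rcases hr3 with rfl | rfl | rfl <;>
        simp only [eux, euy, euz] <;>
        first
          | exact absurd rfl hqr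
          | exact nA1 | exact nA2 | exact nA3
          | exact nA1.symm | exact nA2.symm | exact nA3.symm
    · -- p = v
      obtain rfl := e0.symm
      have hr3 : r = x ∨ r = y ∨ r = z := by
        have hm : r ∈ G.neighborSet v := hpr
        rw [hNv] at hm; simpa using hm
      rcases hq3 with rfl | rfl | rfl <;> rcases hr3 with rfl | rfl | rfl <;>
        simp only [evx, evy, evz] <;>
        first
          | exact absurd rfl hqr
          | exact nB1 | exact nB2 | exact nB3
          | exact nB1.symm | exact nB2.symm | exact nB3.symm
    · -- q = u
      obtain rfl := e0.symm
      rcases hp3 with e9 | e9 | e9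
      · obtain rfl := e9.symm
        rcases hclass x r hpr with ⟨e, -⟩ | ⟨e, -⟩ | ⟨e4, -⟩ | ⟨e4, -⟩ | hpr'
        · exact absurd e nxu
        · exact absurd e nxv
        · exact absurd e4.symm hqr
        · rw [e4, show s(x, u) = s(u, x) from Sym2.eq_swap,
            show s(x, v) = s(v, x) from Sym2.eq_swap, eux, evx]
          exact nX
        · rw [show s(x, u) = s(u, x) from Sym2.eq_swap, eux, eold x r hpr']
          exact fun e => (mssX1.2 r hpr') e.symm
      · obtain rfl := e9.symm
        rcases hclass y r hpr with ⟨e, -⟩ | ⟨e, -⟩ | ⟨e4, -⟩ | ⟨e4, -⟩ | hpr'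
        · exact absurd e nyu
        · exact absurd e nyv
        · exact absurd e4.symm hqr
        · rw [e4, show s(y, u) = s(u, y) from Sym2.eq_swap,
            show s(y, v) = s(v, y) from Sym2.eq_swap, euy, evy]
          exact nY
        · rw [show s(y, u) = s(u, y) from Sym2.eq_swap, euy, eold y r hpr']
          exact fun e => (mssY1.2 r hpr') e.symm
      · obtain rfl := e9.symm
        rcases hclass z r hpr with ⟨e, -⟩ | ⟨e, -⟩ | ⟨e4, -⟩ | ⟨e4, -⟩ | hpr'
        · exact absurd e nzu
        · exact absurd e nzv
        · exact absurd e4.symm hqr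
        · rw [e4, show s(z, u) = s(u, z) from Sym2.eq_swap,
            show s(z, v) = s(v, z) from Sym2.eq_swap, euz, evz]
          exact nZ
        · rw [show s(z, u) = s(u, z) from Sym2.eq_swap, euz, eold z r hpr']
          exact fun e => (mssZ1.2 r hpr') e.symm
    · -- q = v
      obtain rfl := e0.symm
      rcases hp3 with e9 | e9 | e9
      · obtain rfl := e9.symm
        rcases hclass x r hpr with ⟨e, -⟩ | ⟨e, -⟩ | ⟨e4, -⟩ | ⟨e4, -⟩ | hpr'
        · exact absurd e nxu
        · exact absurd e nxv
        · rw [e4, show s(x, v) = s(v, x) from Sym2.eq_swap,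
            show s(x, u) = s(u, x) from Sym2.eq_swap, eux, evx]
          exact nX.symm
        · exact absurd e4.symm hqr
        · rw [show s(x, v) = s(v, x) from Sym2.eq_swap, evx, eold x r hpr']
          exact fun e => (mssX2.2 r hpr') e.symm
      · obtain rfl := e9.symm
        rcases hclass y r hpr with ⟨e, -⟩ | ⟨e, -⟩ | ⟨e4, -⟩ | ⟨e4, -⟩ | hpr'
        · exact absurd e nyu
        · exact absurd e nyv
        · rw [e4, show s(y, v) = s(v, y) from Sym2.eq_swap,
            show s(y, u) = s(u, y) from Sym2.eq_swap, euy, evy]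
          exact nY.symm
        · exact absurd e4.symm hqr
        · rw [show s(y, v) = s(v, y) from Sym2.eq_swap, evy, eold y r hpr']
          exact fun e => (mssY2.2 r hpr') e.symm
      · obtain rfl := e9.symm
        rcases hclass z r hpr with ⟨e, -⟩ | ⟨e, -⟩ | ⟨e4, -⟩ | ⟨e4, -⟩ | hpr'
        · exact absurd e nzu
        · exact absurd e nzv
        · rw [e4, show s(z, v) = s(v, z) from Sym2.eq_swap,
            show s(z, u) = s(u, z) from Sym2.eq_swap, euz, evz]
          exact nZ.symm
        · exact absurd e4.symm hqr
        · rw [show s(z, v) = s(v, z) from Sym2.eq_swap, evz, eold z r hpr']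
          exact fun e => (mssZ2.2 r hpr') e.symm
    · -- first edge old
      obtain ⟨-, hpu, hpv, -, -⟩ := (hadj' p q).mp hpq'
      rcases hclass p r hpr with ⟨e, -⟩ | ⟨e, -⟩ | ⟨e0, hp3⟩ | ⟨e0, hp3⟩ | hpr'
      · exact absurd e hpu
      · exact absurd e hpv
      · obtain rfl := e0.symm
        rcases hp3 with e9 | e9 | e9 <;> obtain rfl := e9.symm
        · rw [eold x q hpq', show s(x, u) = s(u, x) from Sym2.eq_swap, eux]
          exact mssX1.2 q hpq'
        · rw [eold y q hpq', show s(y, u) = s(u, y) from Sym2.eq_swap, euy]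
          exact mssY1.2 q hpq'
        · rw [eold z q hpq', show s(z, u) = s(u, z) from Sym2.eq_swap, euz]
          exact mssZ1.2 q hpq'
      · obtain rfl := e0.symm
        rcases hp3 with e9 | e9 | e9 <;> obtain rfl := e9.symm
        · rw [eold x q hpq', show s(x, v) = s(v, x) from Sym2.eq_swap, evx]
          exact mssX2.2 q hpq'
        · rw [eold y q hpq', show s(y, v) = s(v, y) from Sym2.eq_swap, evy]
          exact mssY2.2 q hpq'
        · rw [eold z q hpq', show s(z, v) = s(v, z) from Sym2.eq_swap, evz]
          exact mssZ2.2 q hpq'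
      · rw [eold p q hpq', eold p r hpr']
        exact hψ2 p q r hpq' hpr' hqr
  · -- vertex-edge
    intro p q hpq h6p
    have hpu : p ≠ u := by rintro rfl; rw [hu3] at h6p; omega
    have hpv : p ≠ v := by rintro rfl; rw [hv3] at h6p; omega
    rcases hclass p q hpq with ⟨e, -⟩ | ⟨e, -⟩ | ⟨e0, hp3⟩ | ⟨e0, hp3⟩ | hpq'
    · exact absurd e hpu
    · exact absurd e hpv
    · obtain rfl := e0.symm
      rcases hp3 with e9 | e9 | e9 <;> obtain rfl := e9.symm
      · rw [show s(x, u) = s(u, x) from Sym2.eq_swap, eux, ecvx]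
        exact fun e => fneX1 e.symm
      · rw [show s(y, u) = s(u, y) from Sym2.eq_swap, euy, ecvy]
        exact fun e => fneY1 e.symm
      · rw [show s(z, u) = s(u, z) from Sym2.eq_swap, euz, ecvz]
        exact fun e => fneZ1 e.symm
    · obtain rfl := e0.symm
      rcases hp3 with e9 | e9 | e9 <;> obtain rfl := e9.symm
      · rw [show s(x, v) = s(v, x) from Sym2.eq_swap, evx, ecvx]
        exact fun e => fneX2 e.symm
      · rw [show s(y, v) = s(v, y) from Sym2.eq_swap, evy, ecvy]
        exact fun e => fneY2 e.symm
      · rw [show s(z, v) = s(v, z) from Sym2.eq_swap, evz, ecvz]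
        exact fun e => fneZ2 e.symm
    · rw [eold p q hpq']
      by_cases e1 : p = x
      · obtain rfl := e1.symm
        rw [ecvx]
        by_cases hcx : 6 ≤ deg G' x
        · rw [hfx_cv hcx]
          exact hψ3 x q hpq' hcx
        · exact (hfx_ne q hpq' ⟨h6p, by omega⟩).1
      by_cases e2 : p = y
      · obtain rfl := e2.symm
        rw [ecvy]
        by_cases hcy : 6 ≤ deg G' y
        · rw [hfy_cv hcy]
          exact hψ3 y q hpq' hcy
        · exact (hfy_ne q hpq' ⟨h6p, by omega⟩).1
      by_cases e3 : p = z
      · obtain rfl := e3.symm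
        rw [ecvz]
        by_cases hcz : 6 ≤ deg G' z
        · rw [hfz_cv hcz]
          exact hψ3 z q hpq' hcz
        · exact (hfz_ne q hpq' ⟨h6p, by omega⟩).1
      · obtain ⟨-, -, -, hqu, hqv⟩ := (hadj' p q).mp hpq'
        rw [ecvo p e1 e2 e3]
        have hdp := hdeg_other p hpu hpv e1 e2 e3
        exact hψ3 p q hpq' (by omega)
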